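/- Let l, k be integers with l ≠ 0 and l dividing k(k−1), let r ∈ ℕ, and let χ : ℤ → {1,…,r} be any finite coloring of ℤ. Then for every m ∈ ℕ there exist integers x, y, z and a color t such that for all i, j ∈ {0, 1, …, m}, the unique integer w satisfying l·w + k = (l·x + k)·(l·y + k)^j·(l·z + k)^{i·j} has χ(w) = t. -/
import Mathlib

/-- `k` is "idempotent" mod `l`, so all positive powers of `l + k` are `≡ k (mod l)`. -/
lemma pow_sub_k_dvd (l k : ℤ) (hdvd : l ∣ k * (k - 1)) :
    ∀ n : ℕ, l ∣ (l + k) ^ (n + 1) - k := by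
  intro n
  induction n with
  | zero => exact ⟨1, by ring⟩
  | succ n ih =>
    have : (l + k) ^ (n + 2) - k
        = (l + k) * ((l + k) ^ (n + 1) - k) + k * l + k * (k - 1) := by ring
    rw [this]
    exact dvd_add (dvd_add (Dvd.dvd.mul_left ih _) ⟨k, by ring⟩) hdvd

/-- Symmetric geo-arithmetic version with only the `⊛` operation: for every finite coloring
of `ℤ` and every `m`, there are `x, y, z` such that all the integers `w` with
`l·w + k = (l·x + k)·(l·y + k)^j·(l·z + k)^{i·j}`, `0 ≤ i, j ≤ m`, have the same color. -/
theorem stmt3 (l k : ℤ) (hl : l ≠ 0) (hdvd : l ∣ k * (k - 1)) (r : ℕ)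
    (χ : ℤ → Fin r) (m : ℕ) :
    ∃ x y z : ℤ, ∃ t : Fin r, ∀ i j : ℕ, i ≤ m → j ≤ m →
      ∃ w : ℤ, l * w + k = (l * x + k) * (l * y + k) ^ j * (l * z + k) ^ (i * j) ∧ χ w = t := by
  set q : ℤ := l + k with hq
  -- w n is the integer with l * w n + k = q ^ (n + 1)
  set w : ℕ → ℤ := fun n => (q ^ (n + 1) - k) / l with hw
  have hwn : ∀ n : ℕ, l * w n + k = q ^ (n + 1) := by
    intro n
    have h := pow_sub_k_dvd l k hdvd n
    rw [hw]
    simp only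
    rw [Int.mul_ediv_cancel' h]
    ring
  -- apply van der Waerden (homothetic copy) to the coloring n ↦ χ (w n) on range (m*(m+1)+1)
  obtain ⟨a, ha, b, c, hmono⟩ :=
    Combinatorics.exists_mono_homothetic_copy (Finset.range (m * (m + 1) + 1))
      (fun n : ℕ => χ (w n))
  refine ⟨w b, w (a - 1), w (a - 1), c, ?_⟩
  intro i j hi hj
  have ha1 : a - 1 + 1 = a := Nat.succ_pred_eq_of_pos ha
  refine ⟨w (a * (j * (i + 1)) + b), ?_, ?_⟩
  · rw [hwn, hwn, hwn, ha1, ← pow_mul, ← pow_mul, ← pow_add, ← pow_add]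
    congr 1
    ring
  · have hmem : j * (i + 1) ∈ Finset.range (m * (m + 1) + 1) := by
      rw [Finset.mem_range]
      have : j * (i + 1) ≤ m * (m + 1) :=
        Nat.mul_le_mul hj (Nat.succ_le_succ hi)
      omega
    simpa [smul_eq_mul] using hmono (j * (i + 1)) hmem
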